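/- For any real μ, ν, υ, there is a unique unital algebra homomorphism Δ : U_q(μ,ν) → U_q(μ,υ) ⊗ U_q(υ,ν) with Δ(E) = E⊗K + K⁻¹⊗E, Δ(F) = F⊗K + K⁻¹⊗F, Δ(K) = K⊗K, and Δ(K⁻¹) = K⁻¹⊗K⁻¹; i.e. these assignments preserve all defining relations, including [Δ(E),Δ(F)] = λ(μΔ(K)² − νΔ(K⁻¹)²). -/

import Mathlib

open scoped TensorProduct

/-- Generators of the algebra U_q(μ,ν). -/
inductive UqGen : Type
  | K | Kinv | E | F

/-- λ = (q − q⁻¹)⁻¹. -/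
noncomputable def lamq (q : ℝ) : ℝ := (q - q⁻¹)⁻¹

/-- The defining relations of U_q(μ,ν): K⁻¹K = 1 = KK⁻¹, KE = qEK, KF = q⁻¹FK,
EF − FE = λ(μK² − νK⁻²). -/
inductive UqRel (q μ ν : ℝ) : FreeAlgebra ℂ UqGen → FreeAlgebra ℂ UqGen → Prop
  | inv_left : UqRel q μ ν (FreeAlgebra.ι ℂ UqGen.Kinv * FreeAlgebra.ι ℂ UqGen.K) 1
  | inv_right : UqRel q μ ν (FreeAlgebra.ι ℂ UqGen.K * FreeAlgebra.ι ℂ UqGen.Kinv) 1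
  | KE : UqRel q μ ν (FreeAlgebra.ι ℂ UqGen.K * FreeAlgebra.ι ℂ UqGen.E)
      ((q : ℂ) • (FreeAlgebra.ι ℂ UqGen.E * FreeAlgebra.ι ℂ UqGen.K))
  | KF : UqRel q μ ν (FreeAlgebra.ι ℂ UqGen.K * FreeAlgebra.ι ℂ UqGen.F)
      (((q⁻¹ : ℝ) : ℂ) • (FreeAlgebra.ι ℂ UqGen.F * FreeAlgebra.ι ℂ UqGen.K))
  | EF : UqRel q μ ν
      (FreeAlgebra.ι ℂ UqGen.E * FreeAlgebra.ι ℂ UqGen.F -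
        FreeAlgebra.ι ℂ UqGen.F * FreeAlgebra.ι ℂ UqGen.E)
      ((lamq q : ℂ) • ((μ : ℂ) • (FreeAlgebra.ι ℂ UqGen.K * FreeAlgebra.ι ℂ UqGen.K) -
        (ν : ℂ) • (FreeAlgebra.ι ℂ UqGen.Kinv * FreeAlgebra.ι ℂ UqGen.Kinv)))

/-- The universal unital ℂ-algebra U_q(μ,ν). -/
noncomputable def Uq (q μ ν : ℝ) : Type := RingQuot (UqRel q μ ν)

noncomputable instance (q μ ν : ℝ) : Ring (Uq q μ ν) :=
  inferInstanceAs (Ring (RingQuot (UqRel q μ ν)))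

noncomputable instance (q μ ν : ℝ) : Algebra ℂ (Uq q μ ν) :=
  inferInstanceAs (Algebra ℂ (RingQuot (UqRel q μ ν)))

/-- The generator K of U_q(μ,ν). -/
noncomputable def UqK (q μ ν : ℝ) : Uq q μ ν :=
  RingQuot.mkAlgHom ℂ (UqRel q μ ν) (FreeAlgebra.ι ℂ UqGen.K)

/-- The generator K⁻¹ of U_q(μ,ν). -/
noncomputable def UqKinv (q μ ν : ℝ) : Uq q μ ν :=
  RingQuot.mkAlgHom ℂ (UqRel q μ ν) (FreeAlgebra.ι ℂ UqGen.Kinv)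

/-- The generator E of U_q(μ,ν). -/
noncomputable def UqE (q μ ν : ℝ) : Uq q μ ν :=
  RingQuot.mkAlgHom ℂ (UqRel q μ ν) (FreeAlgebra.ι ℂ UqGen.E)

/-- The generator F of U_q(μ,ν). -/
noncomputable def UqF (q μ ν : ℝ) : Uq q μ ν :=
  RingQuot.mkAlgHom ℂ (UqRel q μ ν) (FreeAlgebra.ι ℂ UqGen.F)

section Relations

variable (q μ ν : ℝ)

lemma UqKinv_mul_UqK : UqKinv q μ ν * UqK q μ ν = 1 := by
  have h := RingQuot.mkAlgHom_rel ℂ (UqRel.inv_left (q := q) (μ := μ) (ν := ν))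
  rw [map_mul, map_one] at h
  exact h

lemma UqK_mul_UqKinv : UqK q μ ν * UqKinv q μ ν = 1 := by
  have h := RingQuot.mkAlgHom_rel ℂ (UqRel.inv_right (q := q) (μ := μ) (ν := ν))
  rw [map_mul, map_one] at h
  exact h

lemma UqK_mul_UqE : UqK q μ ν * UqE q μ ν = (q : ℂ) • (UqE q μ ν * UqK q μ ν) := by
  have h := RingQuot.mkAlgHom_rel ℂ (UqRel.KE (q := q) (μ := μ) (ν := ν))
  rw [map_mul, map_smul, map_mul] at h
  exact h

lemma UqK_mul_UqF : UqK q μ ν * UqF q μ ν = ((q⁻¹ : ℝ) : ℂ) • (UqF q μ ν * UqK q μ ν) := by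
  have h := RingQuot.mkAlgHom_rel ℂ (UqRel.KF (q := q) (μ := μ) (ν := ν))
  rw [map_mul, map_smul, map_mul] at h
  exact h

lemma UqEF : UqE q μ ν * UqF q μ ν - UqF q μ ν * UqE q μ ν =
    (lamq q : ℂ) • ((μ : ℂ) • (UqK q μ ν * UqK q μ ν) -
      (ν : ℂ) • (UqKinv q μ ν * UqKinv q μ ν)) := by
  have h := RingQuot.mkAlgHom_rel ℂ (UqRel.EF (q := q) (μ := μ) (ν := ν))
  rw [map_sub, map_mul, map_mul, map_smul, map_sub, map_smul, map_smul, map_mul, map_mul] at h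
  exact h

lemma UqKinv_K_cancel (x : Uq q μ ν) : UqKinv q μ ν * (UqK q μ ν * x) = x := by
  rw [← mul_assoc, UqKinv_mul_UqK, one_mul]

lemma UqK_Kinv_cancel (x : Uq q μ ν) : UqK q μ ν * (UqKinv q μ ν * x) = x := by
  rw [← mul_assoc, UqK_mul_UqKinv, one_mul]

lemma UqE_mul_UqKinv : UqE q μ ν * UqKinv q μ ν = (q : ℂ) • (UqKinv q μ ν * UqE q μ ν) := by
  have h := congrArg (fun x => UqKinv q μ ν * x * UqKinv q μ ν) (UqK_mul_UqE q μ ν)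
  simp only [mul_smul_comm, smul_mul_assoc, mul_assoc, UqKinv_K_cancel, UqK_Kinv_cancel,
    UqK_mul_UqKinv, UqKinv_mul_UqK, mul_one, one_mul] at h
  exact h

lemma UqF_mul_UqKinv : UqF q μ ν * UqKinv q μ ν =
    ((q⁻¹ : ℝ) : ℂ) • (UqKinv q μ ν * UqF q μ ν) := by
  have h := congrArg (fun x => UqKinv q μ ν * x * UqKinv q μ ν) (UqK_mul_UqF q μ ν)
  simp only [mul_smul_comm, smul_mul_assoc, mul_assoc, UqKinv_K_cancel, UqK_Kinv_cancel,
    UqK_mul_UqKinv, UqKinv_mul_UqK, mul_one, one_mul] at h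
  exact h

end Relations

/-- for all real μ, ν, υ there is a unique unital algebra homomorphism
Δ : U_q(μ,ν) → U_q(μ,υ) ⊗ U_q(υ,ν) with Δ(E) = E⊗K + K⁻¹⊗E, Δ(F) = F⊗K + K⁻¹⊗F,
Δ(K) = K⊗K and Δ(K⁻¹) = K⁻¹⊗K⁻¹. -/
theorem Uq_comultiplication_exists_unique
    (q : ℝ) (hq0 : 0 < q) (hq1 : q < 1) (μ ν υ : ℝ) :
    ∃! Δ : Uq q μ ν →ₐ[ℂ] (Uq q μ υ ⊗[ℂ] Uq q υ ν),
      Δ (UqE q μ ν) = UqE q μ υ ⊗ₜ[ℂ] UqK q υ ν + UqKinv q μ υ ⊗ₜ[ℂ] UqE q υ ν ∧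
      Δ (UqF q μ ν) = UqF q μ υ ⊗ₜ[ℂ] UqK q υ ν + UqKinv q μ υ ⊗ₜ[ℂ] UqF q υ ν ∧
      Δ (UqK q μ ν) = UqK q μ υ ⊗ₜ[ℂ] UqK q υ ν ∧
      Δ (UqKinv q μ ν) = UqKinv q μ υ ⊗ₜ[ℂ] UqKinv q υ ν := by
  have hq : (q : ℂ) ≠ 0 := by exact_mod_cast hq0.ne'
  have hqq : (q : ℂ) * ((q⁻¹ : ℝ) : ℂ) = 1 := by
    push_cast
    field_simp
  have hqq' : (((q⁻¹ : ℝ) : ℂ)) * (q : ℂ) = 1 := by rw [mul_comm]; exact hqq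
  let fgen : UqGen → (Uq q μ υ ⊗[ℂ] Uq q υ ν) := fun g =>
    match g with
    | UqGen.K => UqK q μ υ ⊗ₜ[ℂ] UqK q υ ν
    | UqGen.Kinv => UqKinv q μ υ ⊗ₜ[ℂ] UqKinv q υ ν
    | UqGen.E => UqE q μ υ ⊗ₜ[ℂ] UqK q υ ν + UqKinv q μ υ ⊗ₜ[ℂ] UqE q υ ν
    | UqGen.F => UqF q μ υ ⊗ₜ[ℂ] UqK q υ ν + UqKinv q μ υ ⊗ₜ[ℂ] UqF q υ ν
  have hrel : ∀ ⦃x y⦄, UqRel q μ ν x y →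
      (FreeAlgebra.lift ℂ fgen) x = (FreeAlgebra.lift ℂ fgen) y := by
    intro x y h
    induction h with
    | inv_left =>
      simp only [map_mul, map_one, FreeAlgebra.lift_ι_apply, fgen,
        Algebra.TensorProduct.tmul_mul_tmul, UqKinv_mul_UqK, Algebra.TensorProduct.one_def]
    | inv_right =>
      simp only [map_mul, map_one, FreeAlgebra.lift_ι_apply, fgen,
        Algebra.TensorProduct.tmul_mul_tmul, UqK_mul_UqKinv, Algebra.TensorProduct.one_def]
    | KE =>
      simp only [map_mul, map_smul, FreeAlgebra.lift_ι_apply, fgen, mul_add, add_mul,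
        Algebra.TensorProduct.tmul_mul_tmul, UqK_mul_UqE, UqK_mul_UqKinv, UqKinv_mul_UqK,
        smul_add, TensorProduct.smul_tmul', TensorProduct.tmul_smul]
    | KF =>
      simp only [map_mul, map_smul, FreeAlgebra.lift_ι_apply, fgen, mul_add, add_mul,
        Algebra.TensorProduct.tmul_mul_tmul, UqK_mul_UqF, UqK_mul_UqKinv, UqKinv_mul_UqK,
        smul_add, TensorProduct.smul_tmul', TensorProduct.tmul_smul]
    | EF =>
      simp only [map_sub, map_mul, map_smul, FreeAlgebra.lift_ι_apply, fgen]
      have key : (UqE q μ υ ⊗ₜ[ℂ] UqK q υ ν + UqKinv q μ υ ⊗ₜ[ℂ] UqE q υ ν) *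
            (UqF q μ υ ⊗ₜ[ℂ] UqK q υ ν + UqKinv q μ υ ⊗ₜ[ℂ] UqF q υ ν) -
          (UqF q μ υ ⊗ₜ[ℂ] UqK q υ ν + UqKinv q μ υ ⊗ₜ[ℂ] UqF q υ ν) *
            (UqE q μ υ ⊗ₜ[ℂ] UqK q υ ν + UqKinv q μ υ ⊗ₜ[ℂ] UqE q υ ν) =
          (UqE q μ υ * UqF q μ υ - UqF q μ υ * UqE q μ υ) ⊗ₜ[ℂ] (UqK q υ ν * UqK q υ ν) +
          (UqKinv q μ υ * UqKinv q μ υ) ⊗ₜ[ℂ]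
            (UqE q υ ν * UqF q υ ν - UqF q υ ν * UqE q υ ν) := by
        simp only [mul_add, add_mul, Algebra.TensorProduct.tmul_mul_tmul,
          TensorProduct.sub_tmul, TensorProduct.tmul_sub,
          UqE_mul_UqKinv, UqF_mul_UqKinv, UqK_mul_UqE, UqK_mul_UqF,
          TensorProduct.smul_tmul', TensorProduct.tmul_smul, smul_smul, hqq, hqq', one_smul]
        abel
      rw [key, UqEF q μ υ, UqEF q υ ν]
      simp only [smul_sub, TensorProduct.sub_tmul, TensorProduct.tmul_sub,
        TensorProduct.smul_tmul', TensorProduct.tmul_smul,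
        Algebra.TensorProduct.tmul_mul_tmul]
      module
  refine ⟨RingQuot.liftAlgHom ℂ ⟨FreeAlgebra.lift ℂ fgen, hrel⟩, ?_, ?_⟩
  · refine ⟨?_, ?_, ?_, ?_⟩
    · exact (RingQuot.liftAlgHom_mkAlgHom_apply ℂ (FreeAlgebra.lift ℂ fgen) hrel
        (FreeAlgebra.ι ℂ UqGen.E)).trans (FreeAlgebra.lift_ι_apply fgen UqGen.E)
    · exact (RingQuot.liftAlgHom_mkAlgHom_apply ℂ (FreeAlgebra.lift ℂ fgen) hrel
        (FreeAlgebra.ι ℂ UqGen.F)).trans (FreeAlgebra.lift_ι_apply fgen UqGen.F)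
    · exact (RingQuot.liftAlgHom_mkAlgHom_apply ℂ (FreeAlgebra.lift ℂ fgen) hrel
        (FreeAlgebra.ι ℂ UqGen.K)).trans (FreeAlgebra.lift_ι_apply fgen UqGen.K)
    · exact (RingQuot.liftAlgHom_mkAlgHom_apply ℂ (FreeAlgebra.lift ℂ fgen) hrel
        (FreeAlgebra.ι ℂ UqGen.Kinv)).trans (FreeAlgebra.lift_ι_apply fgen UqGen.Kinv)
  · rintro Δ' ⟨h1, h2, h3, h4⟩
    apply RingQuot.liftAlgHom_unique
    apply FreeAlgebra.hom_ext
    funext g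
    cases g
    · exact h3.trans (FreeAlgebra.lift_ι_apply fgen UqGen.K).symm
    · exact h4.trans (FreeAlgebra.lift_ι_apply fgen UqGen.Kinv).symm
    · exact h1.trans (FreeAlgebra.lift_ι_apply fgen UqGen.E).symm
    · exact h2.trans (FreeAlgebra.lift_ι_apply fgen UqGen.F).symm
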